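/- Suppose (V, 𝒢, 𝔅) is a (v, m, k, λ)_q group divisible design over GF(q), and (Z, 𝒟) is a 2-(m+n, k, q^{n(k−2)}λ)_q design such that Z contains an n-dimensional subspace U for which 𝒟_U = {B ∈ 𝒟 : B ⊆ U} is a 2-(n, k, q^{n(k−2)}λ)_q design on U. Then there exists a 2-(v+n, k, q^{n(k−2)}λ)_q design. -/

import Mathlib

open Module Submodule Function

section helpers
variable {K : Type*} [Field K] {M : Type*} [AddCommGroup M] [Module K M]
  {N : Type*} [AddCommGroup N] [Module K N]

open scoped Classical in
lemma my_countP_bind {α β : Type*} (s : Multiset α) (g : α → Multiset β) (p : β → Prop)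
    [DecidablePred p] :
    Multiset.countP p (s.bind g) = (s.map fun a => Multiset.countP p (g a)).sum := by
  induction s using Multiset.induction with
  | empty => simp
  | cons a s ih => simp [Multiset.countP_add, ih]

lemma my_sum_map_ite {α : Type*} (s : Multiset α) (p : α → Prop) [DecidablePred p] (c : ℕ) :
    (s.map (fun a => if p a then c else 0)).sum = c * Multiset.countP p s := by
  induction s using Multiset.induction with
  | empty => simp
  | cons a s ih =>
    by_cases h : p a <;> simp [Multiset.countP_cons, h, ih, Nat.mul_add, Nat.mul_succ] <;> omega

lemma my_countP_split {α : Type*} (s : Multiset α) (p r : α → Prop) [DecidablePred p]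
    [DecidablePred r] :
    Multiset.countP (fun a => ¬ r a ∧ p a) s
      = Multiset.countP p s - Multiset.countP (fun a => r a ∧ p a) s := by
  induction s using Multiset.induction with
  | empty => simp
  | cons a s ih =>
    have hle : Multiset.countP (fun a => r a ∧ p a) s ≤ Multiset.countP p s := by
      rw [← Multiset.countP_filter (p := r) p s, Multiset.countP_eq_card_filter p s]
      exact Multiset.countP_le_card _ _
    by_cases hr : r a <;> by_cases hp : p a <;>
      simp_all [Multiset.countP_cons] <;> omega

lemma my_finrank_map (f : M →ₗ[K] N) (hf : Injective f) (p : Submodule K M)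
    [FiniteDimensional K p] :
    finrank K (p.map f) = finrank K p := by
  have : p.map f = LinearMap.range (f.comp p.subtype) := by
    rw [LinearMap.range_comp, Submodule.range_subtype]
  rw [this, LinearMap.finrank_range_of_inj (by
    intro x y hxy
    exact Subtype.ext (hf (by simpa using hxy)))]

lemma my_map_comap (f : M →ₗ[K] N) (T : Submodule K N) (hT : T ≤ LinearMap.range f) :
    (T.comap f).map f = T := by
  rw [Submodule.map_comap_eq, inf_eq_right.mpr hT]

lemma my_finrank_comap (f : M →ₗ[K] N) (hf : Injective f) (T : Submodule K N)
    (hT : T ≤ LinearMap.range f) [FiniteDimensional K (T.comap f)] :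
    finrank K (T.comap f) = finrank K T := by
  conv_rhs => rw [← my_map_comap f T hT]
  exact (my_finrank_map f hf _).symm

lemma my_card_fiber [Fintype K] [FiniteDimensional K M] [FiniteDimensional K N]
    (R : M →ₗ[K] N) (hsurj : Surjective R) (y : N) :
    Nat.card {x : M // R x = y} = Fintype.card K ^ (finrank K M - finrank K N) := by
  obtain ⟨x₀, hx₀⟩ := hsurj y
  have e : {x : M // R x = y} ≃ LinearMap.ker R :=
    { toFun := fun x => ⟨x.1 - x₀, by simp [LinearMap.mem_ker, x.2, hx₀, sub_eq_zero]⟩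
      invFun := fun z => ⟨z.1 + x₀, by
        have := z.2
        simp only [LinearMap.mem_ker] at this
        simp [this, hx₀]⟩
      left_inv := fun x => by simp
      right_inv := fun z => by simp }
  rw [Nat.card_congr e]
  have : Finite M := Module.finite_of_finite K
  have : Fintype (LinearMap.ker R) := Fintype.ofFinite _
  rw [Nat.card_eq_fintype_card, card_eq_pow_finrank (K := K)]
  congr 1
  have h1 := LinearMap.finrank_range_add_finrank_ker R
  rw [LinearMap.range_eq_top.mpr hsurj, finrank_top] at h1
  omega

lemma my_finrank_prod_top [FiniteDimensional K M] [FiniteDimensional K N]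
    (G : Submodule K M) :
    finrank K (G.prod (⊤ : Submodule K N)) = finrank K G + finrank K N := by
  set ψ : (G × N) →ₗ[K] M × N := (G.subtype).prodMap LinearMap.id with hψ
  have hinj : Injective ψ := by
    rintro ⟨a, b⟩ ⟨c, d⟩ h
    have h1 : (a : M) = c := congrArg Prod.fst h
    have h2 : b = d := congrArg Prod.snd h
    exact Prod.ext (Subtype.ext h1) h2
  have hr : LinearMap.range ψ = G.prod (⊤ : Submodule K N) := by
    ext ⟨x, y⟩
    simp only [LinearMap.mem_range, Submodule.mem_prod, Submodule.mem_top, and_true]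
    constructor
    · rintro ⟨⟨a, b⟩, hab⟩
      have : (a : M) = x := congrArg Prod.fst hab
      rw [← this]; exact a.2
    · intro hx; exact ⟨⟨⟨x, hx⟩, y⟩, rfl⟩
  rw [← hr, LinearMap.finrank_range_of_inj hinj, Module.finrank_prod]

end helpers

open scoped Classical in
lemma countP_univ_val {α : Type*} [Fintype α] (p : α → Prop) [DecidablePred p] :
    Multiset.countP p Finset.univ.val = Nat.card {x // p x} := by
  rw [Multiset.countP_eq_card_filter, Nat.card_eq_fintype_card, Fintype.card_subtype]
  rfl

noncomputable def allMaps {K V N : Type*} [Field K] [Fintype K] [AddCommGroup V] [Module K V]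
    [AddCommGroup N] [Module K N] [FiniteDimensional K V] [FiniteDimensional K N]
    (B : Submodule K V) : Multiset (B →ₗ[K] N) :=
  letI : Finite (B →ₗ[K] N) := Module.finite_of_finite K
  letI : Fintype (B →ₗ[K] N) := Fintype.ofFinite _
  Finset.univ.val

open scoped Classical in
lemma countP_allMaps {K V N : Type*} [Field K] [Fintype K] [AddCommGroup V] [Module K V]
    [AddCommGroup N] [Module K N] [FiniteDimensional K V] [FiniteDimensional K N]
    (B : Submodule K V) (p : (B →ₗ[K] N) → Prop) [DecidablePred p] :
    Multiset.countP p (allMaps (N := N) B) = Nat.card {f // p f} := by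
  letI : Finite (B →ₗ[K] N) := Module.finite_of_finite K
  letI : Fintype (B →ₗ[K] N) := Fintype.ofFinite _
  exact countP_univ_val p

section graphs
variable {K : Type*} [Field K] {V : Type*} [AddCommGroup V] [Module K V]
  {N : Type*} [AddCommGroup N] [Module K N]

noncomputable def graphSub (B : Submodule K V) (f : B →ₗ[K] N) : Submodule K (V × N) :=
  LinearMap.range ((B.subtype).prod f)

lemma graphSub_inj (B : Submodule K V) (f : B →ₗ[K] N) :
    Injective ((B.subtype).prod f) := by
  intro x y h
  simpa using congrArg Prod.fst h

lemma graphSub_finrank [FiniteDimensional K V] (B : Submodule K V) (f : B →ₗ[K] N) :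
    finrank K (graphSub B f) = finrank K B :=
  LinearMap.finrank_range_of_inj (graphSub_inj B f)

lemma graphSub_map_fst (B : Submodule K V) (f : B →ₗ[K] N) :
    (graphSub B f).map (LinearMap.fst K V N) = B := by
  rw [graphSub, ← LinearMap.range_comp, LinearMap.fst_prod, Submodule.range_subtype]

lemma graphSub_inf_ker (B : Submodule K V) (f : B →ₗ[K] N) :
    graphSub B f ⊓ LinearMap.ker (LinearMap.fst K V N) = ⊥ := by
  rw [eq_bot_iff]
  rintro x ⟨⟨b, rfl⟩, hk⟩
  have hb : (b : V) = 0 := hk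
  have : b = 0 := Subtype.ext hb
  simp [this]

lemma graphSub_count [Fintype K] [FiniteDimensional K V] [FiniteDimensional K N]
    (B : Submodule K V) (T : Submodule K (V × N))
    [FiniteDimensional K T]
    (hT2 : finrank K T = 2) (hTv2 : finrank K (T.map (LinearMap.fst K V N)) = 2)
    (hTB : T.map (LinearMap.fst K V N) ≤ B) :
    Nat.card {f : B →ₗ[K] N // T ≤ graphSub B f}
      = Fintype.card K ^ (finrank K B * finrank K N - 2 * finrank K N) := by
  have hmem : ∀ t : T, ((t : V × N)).1 ∈ B := fun t =>
    hTB (Submodule.mem_map_of_mem t.2)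
  set ι : T →ₗ[K] B :=
    LinearMap.codRestrict B ((LinearMap.fst K V N).comp T.subtype) hmem with hιdef
  have hrange : LinearMap.range ((LinearMap.fst K V N).comp T.subtype)
      = T.map (LinearMap.fst K V N) := by
    rw [LinearMap.range_comp, Submodule.range_subtype]
  have hker : LinearMap.ker ((LinearMap.fst K V N).comp T.subtype) = ⊥ := by
    have h1 := LinearMap.finrank_range_add_finrank_ker
      ((LinearMap.fst K V N).comp T.subtype)
    rw [hrange, hTv2, hT2] at h1
    have : finrank K (LinearMap.ker ((LinearMap.fst K V N).comp T.subtype)) = 0 := by omega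
    exact Submodule.finrank_eq_zero.mp this
  have hι : Injective ι := by
    intro x y hxy
    exact LinearMap.ker_eq_bot.mp hker (congrArg Subtype.val hxy)
  set R : (B →ₗ[K] N) →ₗ[K] (T →ₗ[K] N) := LinearMap.lcomp K N ι with hRdef
  set h₀ : T →ₗ[K] N := (LinearMap.snd K V N).comp T.subtype with h₀def
  have key : ∀ f : B →ₗ[K] N, T ≤ graphSub B f ↔ R f = h₀ := by
    intro f
    constructor
    · intro h
      ext t
      obtain ⟨b, hb⟩ := h t.2
      have hb1 : (b : V) = ((t : V × N)).1 := congrArg Prod.fst hb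
      have hbt : b = ι t := Subtype.ext hb1
      have hb2 : f b = ((t : V × N)).2 := congrArg Prod.snd hb
      simpa [hRdef, h₀def, ← hbt] using hb2
    · intro h x hx
      refine ⟨ι ⟨x, hx⟩, ?_⟩
      have h2 : f (ι ⟨x, hx⟩) = x.2 := LinearMap.ext_iff.mp h ⟨x, hx⟩
      exact Prod.ext rfl h2
  have hsurj : Surjective R := by
    intro g
    set W := LinearMap.range ι with hW
    set eW := LinearEquiv.ofInjective ι hι with heW
    obtain ⟨W', hW'⟩ := Submodule.exists_isCompl W
    refine ⟨(g.comp (eW.symm : W →ₗ[K] T)).comp (W.projectionOnto W' hW'), ?_⟩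
    ext t
    show g (eW.symm (W.projectionOnto W' hW' (ι t))) = g t
    have h1 : W.projectionOnto W' hW' (ι t) = eW t := by
      have h2 : ((eW t : W) : B) = ι t := rfl
      rw [← h2, Submodule.projectionOnto_apply_left hW']
    rw [h1, LinearEquiv.symm_apply_apply]
  calc Nat.card {f : B →ₗ[K] N // T ≤ graphSub B f}
      = Nat.card {f // R f = h₀} := Nat.card_congr (Equiv.subtypeEquivRight key)
    _ = Fintype.card K ^ (finrank K (B →ₗ[K] N) - finrank K (T →ₗ[K] N)) :=
        my_card_fiber R hsurj h₀
    _ = _ := by rw [Module.finrank_linearMap, Module.finrank_linearMap, hT2]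

end graphs
set_option maxHeartbeats 1000000 in
open scoped Classical in
theorem stmt_18 (q v m n k lam : ℕ)
    (K : Type*) [Field K] [Fintype K] (hq : Fintype.card K = q)
    -- the GDD (V, 𝒢, 𝔅)
    (V : Type*) [AddCommGroup V] [Module K V] [FiniteDimensional K V]
    (hv : Module.finrank K V = v)
    (Gs : Finset (Submodule K V))
    (hGdim : ∀ G ∈ Gs, Module.finrank K ↥G = m)
    (hGpart : ∀ x : V, x ≠ 0 → ∃! G, G ∈ Gs ∧ x ∈ G)
    (Bs : Multiset (Submodule K V))
    (hBdim : ∀ b ∈ Bs, Module.finrank K ↥b = k)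
    (hBG : ∀ b ∈ Bs, ∀ G ∈ Gs, Module.finrank K ↥(b ⊓ G) ≤ 1)
    (hGDD : ∀ T : Submodule K V, Module.finrank K ↥T = 2 → (¬ ∃ G ∈ Gs, T ≤ G) →
      Multiset.countP (fun b => T ≤ b) Bs = lam)
    -- the design (Z, 𝒟)
    (Z : Type*) [AddCommGroup Z] [Module K Z] [FiniteDimensional K Z]
    (hz : Module.finrank K Z = m + n)
    (Ds : Multiset (Submodule K Z))
    (hDdim : ∀ b ∈ Ds, Module.finrank K ↥b = k)
    (hDdes : ∀ T : Submodule K Z, Module.finrank K ↥T = 2 →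
      Multiset.countP (fun b => T ≤ b) Ds = q ^ (n * (k - 2)) * lam)
    -- the subdesign on U
    (U : Submodule K Z) (hU : Module.finrank K ↥U = n)
    (hDU : ∀ T : Submodule K Z, T ≤ U → Module.finrank K ↥T = 2 →
      Multiset.countP (fun b => b ≤ U ∧ T ≤ b) Ds = q ^ (n * (k - 2)) * lam) :
    ∃ Cs : Multiset (Submodule K (Fin (v + n) → K)),
      (∀ c ∈ Cs, Module.finrank K ↥c = k) ∧
      (∀ T : Submodule K (Fin (v + n) → K), Module.finrank K ↥T = 2 →
        Multiset.countP (fun c => T ≤ c) Cs = q ^ (n * (k - 2)) * lam) := by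
  classical
  have hYfin : finrank K (Fin n → K) = n := Module.finrank_fin_fun K
  -- the subspace U₀ = 0 × (Fin n → K)
  set U₀ : Submodule K (V × (Fin n → K)) :=
    LinearMap.ker (LinearMap.fst K V (Fin n → K)) with hU₀def
  have hU₀fin : finrank K U₀ = n := by
    have h1 := LinearMap.finrank_range_add_finrank_ker (LinearMap.fst K V (Fin n → K))
    rw [LinearMap.range_eq_top.mpr Prod.fst_surjective, finrank_top,
      Module.finrank_prod, hv, hYfin] at h1
    rw [← hU₀def] at h1
    omega
  -- the embedding j of U into U₀
  obtain ⟨eU⟩ : Nonempty (U ≃ₗ[K] (Fin n → K)) :=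
    FiniteDimensional.nonempty_linearEquiv_of_finrank_eq (by rw [hU, hYfin])
  set j : U →ₗ[K] V × (Fin n → K) := LinearMap.prod 0 (eU : U →ₗ[K] Fin n → K) with hjdef
  have hjinj : Injective j := by
    intro a b hab
    exact eU.injective (congrArg Prod.snd hab)
  have hjrange : LinearMap.range j = U₀ := by
    apply Submodule.eq_of_le_of_finrank_eq
    · rintro x ⟨u, rfl⟩
      show (LinearMap.fst K V (Fin n → K)) (j u) = 0
      simp [hjdef]
    · rw [LinearMap.finrank_range_of_inj hjinj, hU, hU₀fin]
  -- the embeddings φ G of Z into G × (Fin n → K)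
  obtain ⟨C, hC⟩ := Submodule.exists_isCompl U
  have hCfin : finrank K C = m := by
    have h1 := Submodule.finrank_add_eq_of_isCompl hC
    rw [hU, hz] at h1
    omega
  have hφex : ∀ G ∈ Gs, ∃ φ : Z →ₗ[K] V × (Fin n → K),
      Injective φ ∧ U.map φ = U₀ ∧ LinearMap.range φ = G.prod ⊤ := by
    intro G hG
    obtain ⟨eC⟩ : Nonempty (C ≃ₗ[K] G) :=
      FiniteDimensional.nonempty_linearEquiv_of_finrank_eq (by rw [hCfin, hGdim G hG])
    set prU := U.projectionOnto C hC with hprU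
    set prC := C.projectionOnto U hC.symm with hprC
    set φ : Z →ₗ[K] V × (Fin n → K) :=
      LinearMap.prod (G.subtype ∘ₗ (eC : C →ₗ[K] G) ∘ₗ prC)
        ((eU : U →ₗ[K] Fin n → K) ∘ₗ prU) with hφdef
    have hzdec : ∀ z : Z, ((prU z : Z) + (prC z : Z)) = z := fun z =>
      Submodule.projection_add_projection_eq_self hC z
    have hφinj : Injective φ := by
      rw [← LinearMap.ker_eq_bot, eq_bot_iff]
      intro z hz'
      have h1 : φ z = 0 := hz'
      have h2 : eC (prC z) = 0 := Subtype.ext (congrArg Prod.fst h1)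
      have h3 : prC z = 0 := eC.injective (by simpa using h2)
      have h4 : eU (prU z) = 0 := congrArg Prod.snd h1
      have h5 : prU z = 0 := eU.injective (by simpa using h4)
      have := hzdec z
      rw [h3, h5] at this
      simpa using this.symm
    refine ⟨φ, hφinj, ?_, ?_⟩
    · apply Submodule.eq_of_le_of_finrank_eq
      · rintro x ⟨u, hu, rfl⟩
        show (LinearMap.fst K V (Fin n → K)) (φ u) = 0
        have h3 : prC u = 0 := Submodule.projectionOnto_apply_of_mem_right hC.symm hu
        simp [hφdef, h3]
      · rw [my_finrank_map φ hφinj U, hU, hU₀fin]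
    · apply Submodule.eq_of_le_of_finrank_eq
      · rintro x ⟨z, rfl⟩
        exact Submodule.mem_prod.mpr ⟨((eC : C →ₗ[K] G) (prC z)).2, trivial⟩
      · rw [LinearMap.finrank_range_of_inj hφinj, hz, my_finrank_prod_top,
          hGdim G hG, hYfin]
  choose φ hφinj hφU hφrange using hφex
  -- the three families of blocks
  set DsNU := Ds.filter (fun b => ¬ b ≤ U) with hDsNU
  set DsU := Ds.filter (fun b => b ≤ U) with hDsU
  set copies : Multiset (Submodule K (V × (Fin n → K))) :=
    Gs.attach.val.bind (fun t => DsNU.map (fun b => b.map (φ t.1 t.2))) with hcopies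
  set ucopy : Multiset (Submodule K (V × (Fin n → K))) :=
    DsU.map (fun b => (b.comap U.subtype).map j) with hucopy
  set lifts : Multiset (Submodule K (V × (Fin n → K))) :=
    Bs.bind (fun B => (allMaps (N := Fin n → K) B).map (fun f => graphSub B f)) with hlifts
  set Cs' := copies + ucopy + lifts with hCs'
  -- transfer to Fin (v+n) → K
  obtain ⟨eF⟩ : Nonempty ((V × (Fin n → K)) ≃ₗ[K] (Fin (v + n) → K)) :=
    FiniteDimensional.nonempty_linearEquiv_of_finrank_eq
      (by rw [Module.finrank_prod, hv, hYfin, Module.finrank_fin_fun])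
  refine ⟨Cs'.map (fun c => c.map (eF : V × (Fin n → K) →ₗ[K] Fin (v + n) → K)), ?_, ?_⟩
  · -- dimensions
    intro c hc
    obtain ⟨c', hc', rfl⟩ := Multiset.mem_map.mp hc
    rw [my_finrank_map _ eF.injective]
    rcases Multiset.mem_add.mp hc' with hc' | hc'
    · rcases Multiset.mem_add.mp hc' with hc' | hc'
      · obtain ⟨t, ht, hmem⟩ := Multiset.mem_bind.mp hc'
        obtain ⟨b, hb, rfl⟩ := Multiset.mem_map.mp hmem
        have hbDs : b ∈ Ds := Multiset.mem_of_mem_filter hb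
        rw [my_finrank_map _ (hφinj t.1 t.2)]
        exact hDdim b hbDs
      · obtain ⟨b, hb, rfl⟩ := Multiset.mem_map.mp hc'
        have hbU : b ≤ U := (Multiset.mem_filter.mp hb).2
        have hbDs : b ∈ Ds := (Multiset.mem_filter.mp hb).1
        have hmc : (b.comap U.subtype).map U.subtype = b := by
          rw [Submodule.map_comap_subtype, inf_eq_right.mpr hbU]
        have h5 := my_finrank_map U.subtype (Submodule.injective_subtype U) (b.comap U.subtype)
        rw [hmc] at h5
        rw [my_finrank_map _ hjinj, ← h5]
        exact hDdim b hbDs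
    · obtain ⟨B, hB, hmem⟩ := Multiset.mem_bind.mp hc'
      obtain ⟨f, hf, rfl⟩ := Multiset.mem_map.mp hmem
      rw [graphSub_finrank]
      exact hBdim B hB
  · -- the design property
    intro T hT2
    set lam' := q ^ (n * (k - 2)) * lam with hlam'
    set T₀ := T.map (eF.symm : (Fin (v + n) → K) →ₗ[K] V × (Fin n → K)) with hT₀def
    have hT₀2 : finrank K T₀ = 2 := by
      rw [hT₀def, my_finrank_map _ eF.symm.injective]; exact hT2
    have hiffF : ∀ c : Submodule K (V × (Fin n → K)),
        (T ≤ c.map (eF : V × (Fin n → K) →ₗ[K] Fin (v + n) → K)) ↔ T₀ ≤ c := by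
      intro c
      constructor
      · rintro h x ⟨y, hy, rfl⟩
        obtain ⟨z, hz', hz2⟩ := h hy
        rw [← hz2]
        simpa using hz'
      · intro h x hx
        exact ⟨eF.symm x, h ⟨x, hx, rfl⟩, by simp⟩
    rw [Multiset.countP_map, ← Multiset.countP_eq_card_filter]
    have hcg0 : Multiset.countP (fun c => T ≤ c.map (eF : V × (Fin n → K) →ₗ[K] Fin (v + n) → K)) Cs'
        = Multiset.countP (fun c => T₀ ≤ c) Cs' :=
      Multiset.countP_congr rfl (fun c _ => propext (hiffF c))
    rw [hcg0]
    -- set up the case analysis data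
    set Tv := T₀.map (LinearMap.fst K V (Fin n → K)) with hTvdef
    have hrn : finrank K Tv
        + finrank K (LinearMap.ker ((LinearMap.fst K V (Fin n → K)).comp T₀.subtype)) = 2 := by
      have h1 := LinearMap.finrank_range_add_finrank_ker
        ((LinearMap.fst K V (Fin n → K)).comp T₀.subtype)
      rw [LinearMap.range_comp, Submodule.range_subtype, hT₀2] at h1
      rw [← hTvdef] at h1
      exact h1
    have hprodiff : ∀ Gm : Submodule K V, T₀ ≤ Gm.prod ⊤ ↔ Tv ≤ Gm := by
      intro Gm
      constructor
      · rintro h x ⟨y, hy, rfl⟩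
        exact (Submodule.mem_prod.mp (h hy)).1
      · intro h x hx
        exact Submodule.mem_prod.mpr ⟨h (Submodule.mem_map_of_mem hx), trivial⟩
    have hU₀iff : T₀ ≤ U₀ ↔ Tv = ⊥ := by
      constructor
      · intro h
        rw [eq_bot_iff]
        rintro x ⟨y, hy, rfl⟩
        simpa using LinearMap.mem_ker.mp (h hy)
      · intro h x hx
        have h2 : x.1 ∈ Tv := Submodule.mem_map_of_mem hx
        rw [h] at h2
        exact LinearMap.mem_ker.mpr (by simpa using h2)
    -- count in the copies
    have copy_count : ∀ (G : Submodule K V) (hG : G ∈ Gs),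
        Multiset.countP (fun c => T₀ ≤ c) (DsNU.map (fun b => b.map (φ G hG)))
          = if Tv ≤ G then (if T₀ ≤ U₀ then 0 else lam') else 0 := by
      intro G hG
      rw [Multiset.countP_map, ← Multiset.countP_eq_card_filter]
      by_cases hTvG : Tv ≤ G
      · have hran : T₀ ≤ LinearMap.range (φ G hG) := by
          rw [hφrange G hG]; exact (hprodiff G).mpr hTvG
        set S := T₀.comap (φ G hG) with hSdef
        have hmapS : S.map (φ G hG) = T₀ := my_map_comap _ _ hran
        have hS2 : finrank K S = 2 := by
          rw [hSdef, my_finrank_comap _ (hφinj G hG) _ hran]; exact hT₀2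
        have hcg1 : Multiset.countP (fun b => T₀ ≤ b.map (φ G hG) ∧ ¬ b ≤ U) Ds
            = Multiset.countP (fun b => ¬ b ≤ U ∧ S ≤ b) Ds := by
          apply Multiset.countP_congr rfl
          intro b _
          apply propext
          rw [← hmapS, Submodule.map_le_map_iff_of_injective (hφinj G hG)]
          exact and_comm
        rw [hDsNU, Multiset.countP_filter, hcg1,
          my_countP_split Ds (fun b => S ≤ b) (fun b => b ≤ U)]
        by_cases hT₀U₀ : T₀ ≤ U₀
        · have hSU : S ≤ U := by
            have h3 : S.map (φ G hG) ≤ U.map (φ G hG) := by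
              rw [hmapS, hφU G hG]; exact hT₀U₀
            exact (Submodule.map_le_map_iff_of_injective (hφinj G hG) _ _).mp h3
          rw [hDdes S hS2, hDU S hSU hS2, if_pos hTvG, if_pos hT₀U₀]
          omega
        · have h0 : Multiset.countP (fun b => b ≤ U ∧ S ≤ b) Ds = 0 := by
            rw [Multiset.countP_eq_zero]
            rintro b hb ⟨hbU, hSb⟩
            apply hT₀U₀
            rw [← hmapS, ← hφU G hG]
            exact Submodule.map_mono (hSb.trans hbU)
          rw [hDdes S hS2, h0, if_pos hTvG, if_neg hT₀U₀, hlam']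
          omega
      · rw [if_neg hTvG, Multiset.countP_eq_zero]
        intro b hb h
        apply hTvG
        apply (hprodiff G).mp
        refine le_trans h ?_
        rw [← hφrange G hG]
        exact LinearMap.map_le_range
    -- count in the single copy on U₀
    have ucopy_count :
        Multiset.countP (fun c => T₀ ≤ c) ucopy = if T₀ ≤ U₀ then lam' else 0 := by
      rw [hucopy, Multiset.countP_map, ← Multiset.countP_eq_card_filter]
      by_cases hT₀U₀ : T₀ ≤ U₀
      · have hran : T₀ ≤ LinearMap.range j := by rw [hjrange]; exact hT₀U₀
        set S' := T₀.comap j with hS'def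
        have hmapS : S'.map j = T₀ := my_map_comap _ _ hran
        have hS2 : finrank K S' = 2 := by
          rw [hS'def, my_finrank_comap _ hjinj _ hran]; exact hT₀2
        set S'' := S'.map U.subtype with hS''def
        have hS''U : S'' ≤ U := Submodule.map_subtype_le U S'
        have hS''2 : finrank K S'' = 2 := by
          rw [hS''def, my_finrank_map _ (Submodule.injective_subtype U)]; exact hS2
        have hcg1 : Multiset.countP (fun b => T₀ ≤ (b.comap U.subtype).map j ∧ b ≤ U) Ds
            = Multiset.countP (fun b => b ≤ U ∧ S'' ≤ b) Ds := by
          apply Multiset.countP_congr rfl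
          intro b _
          apply propext
          rw [← hmapS, Submodule.map_le_map_iff_of_injective hjinj, hS''def,
            ← Submodule.map_le_iff_le_comap]
          exact and_comm
        rw [hDsU, Multiset.countP_filter, hcg1, if_pos hT₀U₀, hlam']
        exact hDU S'' hS''U hS''2
      · rw [if_neg hT₀U₀, Multiset.countP_eq_zero]
        intro b hb h
        apply hT₀U₀
        refine le_trans h ?_
        rw [← hjrange]
        exact LinearMap.map_le_range
    -- count in the lifted blocks
    have lift_term : ∀ B ∈ Bs,
        Multiset.countP (fun c => T₀ ≤ c)
            ((allMaps (N := Fin n → K) B).map (fun f => graphSub B f))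
          = if Tv ≤ B ∧ finrank K Tv = 2 then q ^ (n * (k - 2)) else 0 := by
      intro B hB
      rw [Multiset.countP_map, ← Multiset.countP_eq_card_filter,
        countP_allMaps B (fun f => T₀ ≤ graphSub B f)]
      by_cases h : Tv ≤ B ∧ finrank K Tv = 2
      · rw [if_pos h, graphSub_count B T₀ hT₀2 h.2 h.1, hq, hBdim B hB, hYfin]
        congr 1
        have hk2 : 2 ≤ k := by
          have h3 := Submodule.finrank_mono h.1
          rw [h.2, hBdim B hB] at h3
          exact h3
        rw [Nat.mul_comm n (k - 2), Nat.sub_mul]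
      · rw [if_neg h]
        have hie : IsEmpty {f : B →ₗ[K] (Fin n → K) // T₀ ≤ graphSub B f} := by
          constructor
          rintro ⟨f, hf⟩
          apply h
          have h1 : Tv ≤ B := by
            rw [hTvdef, ← graphSub_map_fst B f]
            exact Submodule.map_mono hf
          refine ⟨h1, ?_⟩
          have hker : LinearMap.ker ((LinearMap.fst K V (Fin n → K)).comp T₀.subtype) = ⊥ := by
            rw [eq_bot_iff]
            intro x hx
            have hx0 : (x : V × (Fin n → K)) ∈ graphSub B f ⊓ U₀ :=
              ⟨hf x.2, LinearMap.mem_ker.mpr (LinearMap.mem_ker.mp hx)⟩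
            rw [graphSub_inf_ker] at hx0
            have hx1 : (x : V × (Fin n → K)) = 0 := by simpa using hx0
            exact (Submodule.mem_bot _).mpr (Subtype.ext hx1)
          rw [hker, finrank_bot] at hrn
          omega
        rw [Nat.card_of_isEmpty]
    have lifts_count : Multiset.countP (fun c => T₀ ≤ c) lifts
        = if finrank K Tv = 2
            then q ^ (n * (k - 2)) * Multiset.countP (fun B => Tv ≤ B) Bs else 0 := by
      rw [hlifts, my_countP_bind]
      have hmc : (Bs.map fun B => Multiset.countP (fun c => T₀ ≤ c)
              ((allMaps (N := Fin n → K) B).map (fun f => graphSub B f)))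
          = Bs.map fun B => if Tv ≤ B ∧ finrank K Tv = 2 then q ^ (n * (k - 2)) else 0 :=
        Multiset.map_congr rfl lift_term
      rw [hmc]
      by_cases h2 : finrank K Tv = 2
      · rw [if_pos h2]
        have hmc2 : (Bs.map fun B => if Tv ≤ B ∧ finrank K Tv = 2 then q ^ (n * (k - 2)) else 0)
            = Bs.map fun B => if Tv ≤ B then q ^ (n * (k - 2)) else 0 := by
          apply Multiset.map_congr rfl
          intro B _
          by_cases hb : Tv ≤ B <;> simp [hb, h2]
        rw [hmc2, my_sum_map_ite]
      · rw [if_neg h2]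
        apply Multiset.sum_eq_zero
        intro x hx
        obtain ⟨B, hB, rfl⟩ := Multiset.mem_map.mp hx
        rw [if_neg (fun hh => h2 hh.2)]
    have copies_count : Multiset.countP (fun c => T₀ ≤ c) copies
        = ∑ t ∈ Gs.attach,
            (if Tv ≤ (t : Submodule K V) then (if T₀ ≤ U₀ then 0 else lam') else 0) := by
      rw [hcopies, my_countP_bind, Finset.sum_eq_multiset_sum]
      congr 1
      apply Multiset.map_congr rfl
      intro t _
      exact copy_count t.1 t.2
    rw [hCs', Multiset.countP_add, Multiset.countP_add, copies_count, ucopy_count, lifts_count]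
    by_cases hU0 : T₀ ≤ U₀
    · have hTvbot : Tv = ⊥ := hU₀iff.mp hU0
      have hTv2 : finrank K Tv ≠ 2 := by rw [hTvbot, finrank_bot]; omega
      have hz0 : ∀ t ∈ Gs.attach,
          (if Tv ≤ (t : Submodule K V) then (if T₀ ≤ U₀ then 0 else lam') else 0) = 0 := by
        intro t _
        simp [hU0]
      rw [if_neg hTv2, Finset.sum_congr rfl hz0, Finset.sum_const_zero, if_pos hU0]
      simp
    · by_cases hex : ∃ G ∈ Gs, Tv ≤ G
      · obtain ⟨G, hG, hTvG⟩ := hex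
        have hTvbot : Tv ≠ ⊥ := fun h => hU0 (hU₀iff.mpr h)
        obtain ⟨x₀, hx₀Tv, hx₀⟩ := (Submodule.ne_bot_iff Tv).mp hTvbot
        have huniq : ∀ G' ∈ Gs, Tv ≤ G' → G' = G := fun G' hG' hle =>
          (hGpart x₀ hx₀).unique ⟨hG', hle hx₀Tv⟩ ⟨hG, hTvG hx₀Tv⟩
        have hsum := Finset.sum_eq_single (s := Gs.attach)
          (f := fun t => if Tv ≤ (t : Submodule K V)
            then (if T₀ ≤ U₀ then 0 else lam') else 0)
          (⟨G, hG⟩ : {x // x ∈ Gs})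
          (fun t _ hne => if_neg (fun hle => hne (Subtype.ext (huniq t.1 t.2 hle))))
          (fun h => absurd (Finset.mem_attach _ _) h)
        rw [hsum]
        have hone : ((fun t => if Tv ≤ ((t : {x // x ∈ Gs}) : Submodule K V)
            then (if T₀ ≤ U₀ then 0 else lam') else 0) (⟨G, hG⟩ : {x // x ∈ Gs})) = lam' := by
          simp [hTvG, hU0]
        rw [show (if Tv ≤ ((⟨G, hG⟩ : {x // x ∈ Gs}) : Submodule K V)
            then (if T₀ ≤ U₀ then 0 else lam') else 0) = lam' from hone, if_neg hU0]
        have hlift0 : (if finrank K Tv = 2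
            then q ^ (n * (k - 2)) * Multiset.countP (fun B => Tv ≤ B) Bs else 0) = 0 := by
          by_cases h2 : finrank K Tv = 2
          · rw [if_pos h2]
            have hc0 : Multiset.countP (fun B => Tv ≤ B) Bs = 0 := by
              rw [Multiset.countP_eq_zero]
              intro B hB hle
              have h3 := Submodule.finrank_mono (le_inf hle hTvG)
              rw [h2] at h3
              have h4 := hBG B hB G hG
              omega
            rw [hc0, Nat.mul_zero]
          · rw [if_neg h2]
        rw [hlift0]
        omega
      · have hTvne : finrank K Tv ≠ 0 := by
          intro h0
          exact hU0 (hU₀iff.mpr (Submodule.finrank_eq_zero.mp h0))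
        have hTv2 : finrank K Tv = 2 := by
          by_contra h2
          have h1 : finrank K Tv = 1 := by omega
          obtain ⟨x₀, hx₀Tv, hx₀⟩ := (Submodule.ne_bot_iff Tv).mp
            (fun h => hTvne (by rw [h, finrank_bot]))
          have hsp : (K ∙ x₀) = Tv := by
            apply Submodule.eq_of_le_of_finrank_eq
            · rw [Submodule.span_le]
              simpa using hx₀Tv
            · rw [finrank_span_singleton hx₀, h1]
          obtain ⟨G, ⟨hG, hxG⟩, -⟩ := hGpart x₀ hx₀
          refine absurd ⟨G, hG, ?_⟩ hex
          rw [← hsp, Submodule.span_le]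
          simpa using hxG
        have hsum0 : (∑ t ∈ Gs.attach,
            (if Tv ≤ (t : Submodule K V) then (if T₀ ≤ U₀ then 0 else lam') else 0)) = 0 := by
          apply Finset.sum_eq_zero
          intro t _
          exact if_neg (fun hle => hex ⟨t.1, t.2, hle⟩)
        rw [hsum0, if_neg hU0, if_pos hTv2, hGDD Tv hTv2 hex, hlam']
        omega
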